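/- arXiv:1111.5472 — 7 statements merged into one kernel-verified Lean document; each statement's English description precedes it below -/
import Mathlib

section
/- Let M be an ε-differentially private mechanism and suppose player i's privacy utility Up_i satisfies the privacy-value assumption with bound F_i. Then for any types θ_i, θ_i' and profile θ_{-i}, |E[Up_i(θ_i, M(θ_i,θ_{-i}), M, θ_{-i})] − E[Up_i(θ_i, M(θ_i',θ_{-i}), M, θ_{-i})]| ≤ 2·F_i(e^ε)·SD(M(θ_i,θ_{-i}), M(θ_i',θ_{-i})). -/
open Finset

/-- Probability that the mechanism `M` outputs `o` on report profile `θ`. -/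
noncomputable def outProb {Θ O R : Type*} [Fintype R] [DecidableEq O] {n : ℕ}
    (M : (Fin n → Θ) → R → O) (μ : R → ℝ) (θ : Fin n → Θ) (o : O) : ℝ :=
  ∑ r ∈ univ.filter (fun r => M θ r = o), μ r

lemma outProb_nonneg {Θ O R : Type*} [Fintype R] [DecidableEq O] {n : ℕ}
    (M : (Fin n → Θ) → R → O) (μ : R → ℝ) (hμ0 : ∀ r, 0 ≤ μ r)
    (θ : Fin n → Θ) (o : O) : 0 ≤ outProb M μ θ o :=
  Finset.sum_nonneg fun r _ => hμ0 r

lemma expand_sum {Θ O R : Type*} [Fintype R] [Fintype O] [DecidableEq O] {n : ℕ}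
    (M : (Fin n → Θ) → R → O) (μ : R → ℝ) (θ' : Fin n → Θ) (g : O → ℝ) :
    ∑ r, μ r * g (M θ' r) = ∑ o, outProb M μ θ' o * g o := by
  rw [← Finset.sum_fiberwise (univ : Finset R) (fun r => M θ' r) (fun r => μ r * g (M θ' r))]
  refine Finset.sum_congr rfl fun o _ => ?_
  rw [outProb, Finset.sum_mul]
  refine Finset.sum_congr rfl fun r hr => ?_
  rw [(Finset.mem_filter.mp hr).2]

/-- For an ε-differentially private `M` whose privacy utility `Up_i`
satisfies the privacy-value assumption with bound `F_i`, the expected privacy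
utilities under reports `θ_i` and `θ_i'` differ by at most
`2·F_i(e^ε)·SD(M(θ_i,θ_{-i}), M(θ_i',θ_{-i}))`. -/
theorem stmt4 {Θ O R : Type*} [Fintype R] [Fintype O] [Fintype Θ] [Nonempty Θ]
    [DecidableEq O] [DecidableEq Θ] {n : ℕ}
    (M : (Fin n → Θ) → R → O) (μ : R → ℝ)
    (hμ0 : ∀ r, 0 ≤ μ r) (hμ1 : ∑ r, μ r = 1)
    (ε : ℝ) (hε : 0 ≤ ε)
    (i : Fin n)
    (Up : Θ → O → (Fin n → Θ) → ℝ)   -- Up i (θ_i, o, M, θ_{-i})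
    (F : ℝ → ℝ) (hFmono : Monotone F)
    (hAssum : ∀ (θi : Θ) (o : O) (θ : Fin n → Θ),
      |Up θi o θ| ≤ F (⨆ t : Θ, ⨆ t' : Θ,
        outProb M μ (Function.update θ i t) o / outProb M μ (Function.update θ i t') o))
    (hDP : ∀ (θ : Fin n → Θ) (o : O) (t t' : Θ),
      outProb M μ (Function.update θ i t) o
        ≤ Real.exp ε * outProb M μ (Function.update θ i t') o)
    (θi θi' : Θ) (θ : Fin n → Θ) :
    |(∑ r, μ r * Up θi (M (Function.update θ i θi) r) θ) -
     (∑ r, μ r * Up θi (M (Function.update θ i θi') r) θ)|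
      ≤ 2 * F (Real.exp ε) *
        ((1 / 2) * ∑ o : O,
          |outProb M μ (Function.update θ i θi) o -
           outProb M μ (Function.update θ i θi') o|) := by
  have hexp : (0:ℝ) ≤ Real.exp ε := (Real.exp_pos ε).le
  -- bound |Up θi o θ| ≤ F (exp ε)
  have hUp : ∀ o : O, |Up θi o θ| ≤ F (Real.exp ε) := by
    intro o
    refine (hAssum θi o θ).trans (hFmono ?_)
    refine ciSup_le fun t => ciSup_le fun t' => ?_
    set q := outProb M μ (Function.update θ i t') o with hq
    have hq0 : 0 ≤ q := outProb_nonneg M μ hμ0 _ o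
    rcases eq_or_lt_of_le hq0 with h | h
    · have hp : outProb M μ (Function.update θ i t) o ≤ 0 := by
        have := hDP θ o t t'; rw [← hq] at this; rw [← h] at this; simpa using this
      have hp0 : outProb M μ (Function.update θ i t) o = 0 :=
        le_antisymm hp (outProb_nonneg M μ hμ0 _ o)
      rw [hp0, ← h, zero_div]
      exact hexp
    · rw [div_le_iff₀ h]
      exact hDP θ o t t'
  rw [expand_sum M μ (Function.update θ i θi) (fun o => Up θi o θ),
      expand_sum M μ (Function.update θ i θi') (fun o => Up θi o θ), ← Finset.sum_sub_distrib]
  have key : |∑ o : O, (outProb M μ (Function.update θ i θi) o * Up θi o θ -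
      outProb M μ (Function.update θ i θi') o * Up θi o θ)|
      ≤ ∑ o : O, |outProb M μ (Function.update θ i θi) o -
          outProb M μ (Function.update θ i θi') o| * F (Real.exp ε) := by
    refine (Finset.abs_sum_le_sum_abs _ _).trans (Finset.sum_le_sum fun o _ => ?_)
    rw [← sub_mul, abs_mul]
    exact mul_le_mul_of_nonneg_left (hUp o) (abs_nonneg _)
  refine key.trans (le_of_eq ?_)
  rw [← Finset.sum_mul]
  ring
end

section
/- (Generic universal truthfulness lemma.) Let M : Θ^n × R → O be ε-differentially private, and suppose player i's utility is U_i = Uo_i + Up_i where Up_i satisfies the privacy-value assumption with bound F_i. Assume that for all θ_i, θ_i', θ_{-i} and all r, if M(θ_i,θ_{-i};r) ≠ M(θ_i',θ_{-i};r) then Uo_i(θ_i, M(θ_i,θ_{-i};r)) − Uo_i(θ_i, M(θ_i',θ_{-i};r)) ≥ 2·F_i(e^ε). Then M is universally truthful for player i: for all θ_i, θ_i', θ_{-i}, r, U_i(θ_i, M(θ_i,θ_{-i};r), M, θ_{-i}) ≥ U_i(θ_i, M(θ_i',θ_{-i};r), M, θ_{-i}). -/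
open Finset

/-- generic universal truthfulness lemma: if `M` is ε-differentially
private, player i's utility is `U_i = Uo_i + Up_i` with `Up_i` satisfying the
privacy-value assumption with bound `F_i`, and whenever a misreport changes the
outcome (for fixed randomness) the truthful outcome utility gains at least
`2·F_i(e^ε)`, then `M` is universally truthful for player i. -/
theorem stmt5 {Θ O R : Type*} [Fintype R] [Fintype Θ] [Nonempty Θ]
    [DecidableEq O] [DecidableEq Θ] {n : ℕ}
    (M : (Fin n → Θ) → R → O) (μ : R → ℝ)
    (hμ0 : ∀ r, 0 ≤ μ r) (hμ1 : ∑ r, μ r = 1)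
    (ε : ℝ) (hε : 0 ≤ ε)
    (i : Fin n)
    (Uo : Θ → O → ℝ)                 -- outcome utility Uo_i
    (Up : Θ → O → (Fin n → Θ) → ℝ)   -- privacy utility Up_i (θ_i, o, M, θ_{-i})
    (F : ℝ → ℝ) (hFmono : Monotone F)
    -- privacy-value assumption
    (hAssum : ∀ (θi : Θ) (o : O) (θ : Fin n → Θ),
      |Up θi o θ| ≤ F (⨆ t : Θ, ⨆ t' : Θ,
        outProb M μ (Function.update θ i t) o / outProb M μ (Function.update θ i t') o))
    -- ε-differential privacy
    (hDP : ∀ (θ : Fin n → Θ) (o : O) (t t' : Θ),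
      outProb M μ (Function.update θ i t) o
        ≤ Real.exp ε * outProb M μ (Function.update θ i t') o)
    -- outcome-utility gap on any outcome change
    (hGap : ∀ (θi θi' : Θ) (θ : Fin n → Θ) (r : R),
      M (Function.update θ i θi) r ≠ M (Function.update θ i θi') r →
      Uo θi (M (Function.update θ i θi) r) - Uo θi (M (Function.update θ i θi') r)
        ≥ 2 * F (Real.exp ε)) :
    ∀ (θi θi' : Θ) (θ : Fin n → Θ) (r : R),
      Uo θi (M (Function.update θ i θi) r) + Up θi (M (Function.update θ i θi) r) θ
        ≥ Uo θi (M (Function.update θ i θi') r)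
          + Up θi (M (Function.update θ i θi') r) θ := by
  intro θi θi' θ r
  have hnn : ∀ θ' o, 0 ≤ outProb M μ θ' o := fun θ' o =>
    Finset.sum_nonneg (fun r _ => hμ0 r)
  have hbound : ∀ o, |Up θi o θ| ≤ F (Real.exp ε) := by
    intro o
    refine (hAssum θi o θ).trans (hFmono ?_)
    refine ciSup_le fun t => ciSup_le fun t' => ?_
    rcases eq_or_lt_of_le (hnn (Function.update θ i t') o) with h0 | hpos
    · have h1 : outProb M μ (Function.update θ i t) o ≤ 0 := by
        have := hDP θ o t t'
        rw [← h0] at this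
        simpa using this
      have h2 : outProb M μ (Function.update θ i t) o = 0 :=
        le_antisymm h1 (hnn _ _)
      rw [h2, ← h0]
      simpa using Real.one_le_exp hε |>.trans' zero_le_one
    · rw [div_le_iff₀ hpos]
      exact hDP θ o t t'
  by_cases heq : M (Function.update θ i θi) r = M (Function.update θ i θi') r
  · rw [heq]
  · have hg := hGap θi θi' θ r heq
    have h1 := (abs_le.mp (hbound (M (Function.update θ i θi) r))).1
    have h2 := (abs_le.mp (hbound (M (Function.update θ i θi') r))).2
    linarith
end

section
/- For the noisy majority election mechanism with noise Pr[r=k] ∝ exp(−ε|k|) on ℤ, for any profile θ and any Δ ≥ 1, the probability that the number of voters whose preferred candidate wins is at most max_{o'∈{A,B}} #{i : θ_i=o'} − Δ is strictly less than e^{−εΔ}. -/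
open Finset

def countA {n : ℕ} (θ : Fin n → Bool) : ℤ := (univ.filter (fun j => θ j = true)).card

def countB {n : ℕ} (θ : Fin n → Bool) : ℤ := (univ.filter (fun j => θ j = false)).card

/-- The noisy majority election mechanism: output A (`true`) iff `#A − #B ≥ r`. -/
def elect {n : ℕ} (θ : Fin n → Bool) (r : ℤ) : Bool := decide (countA θ - countB θ ≥ r)

/-- Number of voters whose preferred candidate is `o`. -/
def satisfied {n : ℕ} (θ : Fin n → Bool) (o : Bool) : ℤ :=
  (univ.filter (fun j => θ j = o)).card

/-- The two-sided discrete Laplace pmf on ℤ: `Pr[r=k] = e^{−ε|k|}(1−e^{−ε})/(1+e^{−ε})`. -/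
noncomputable def lapPMF (ε : ℝ) (k : ℤ) : ℝ :=
  Real.exp (-ε * |(k : ℝ)|) * (1 - Real.exp (-ε)) / (1 + Real.exp (-ε))

lemma lapPMF_neg (ε : ℝ) (k : ℤ) : lapPMF ε (-k) = lapPMF ε k := by
  simp [lapPMF, abs_neg]

lemma tail_sum (ε : ℝ) (hε : 0 < ε) (m : ℤ) (hm : 1 ≤ m) :
    (∑' k : ℤ, if m ≤ k then lapPMF ε k else 0)
      = Real.exp (-(ε * m)) / (1 + Real.exp (-ε)) := by
  set q := Real.exp (-ε) with hq
  have hq0 : 0 < q := Real.exp_pos _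
  have hq1 : q < 1 := Real.exp_lt_one_iff.mpr (by linarith)
  set f : ℤ → ℝ := fun k => if m ≤ k then lapPMF ε k else 0 with hf
  have hinj : Function.Injective (fun j : ℕ => m + (j : ℤ)) := by
    intro a b h; simpa using h
  have hsupp : Function.support f ⊆ Set.range (fun j : ℕ => m + (j : ℤ)) := by
    intro k hk
    simp only [hf, Function.mem_support, ne_eq, ite_eq_right_iff, not_forall] at hk
    obtain ⟨hmk, -⟩ := hk
    exact ⟨(k - m).toNat, by show m + ((k - m).toNat : ℤ) = k; omega⟩
  rw [← hinj.tsum_eq hsupp]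
  have hval : ∀ j : ℕ, f (m + (j : ℤ)) = (Real.exp (-(ε * m)) * ((1 - q) / (1 + q))) * q ^ j := by
    intro j
    have h1 : m ≤ m + (j : ℤ) := by omega
    have hm' : (1:ℝ) ≤ (m:ℝ) := by exact_mod_cast hm
    have hj0 : (0:ℝ) ≤ (j:ℝ) := by positivity
    have habs : |((m + (j : ℤ) : ℤ) : ℝ)| = (m : ℝ) + j := by
      rw [abs_of_nonneg] <;> [push_cast; push_cast] <;> linarith
    have hqj : Real.exp ((-ε) * (j:ℝ)) = q ^ j := by
      rw [mul_comm, Real.exp_nat_mul]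
    simp only [hf, if_pos h1, lapPMF, habs]
    rw [show -ε * ((m:ℝ) + (j:ℝ)) = -(ε * m) + (-ε) * (j:ℝ) by ring, Real.exp_add, hqj]
    ring
  calc ∑' j : ℕ, f (m + (j : ℤ))
      = ∑' j : ℕ, (Real.exp (-(ε * m)) * ((1 - q) / (1 + q))) * q ^ j := by
        exact tsum_congr hval
    _ = (Real.exp (-(ε * m)) * ((1 - q) / (1 + q))) * (1 - q)⁻¹ := by
        rw [tsum_mul_left, tsum_geometric_of_lt_one hq0.le hq1]
    _ = Real.exp (-(ε * m)) / (1 + q) := by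
        have h1 : (1:ℝ) - q ≠ 0 := by linarith
        have h2 : (1:ℝ) + q ≠ 0 := by linarith
        field_simp

lemma tail_lt (ε : ℝ) (hε : 0 < ε) (m Δ : ℤ) (hΔ : 1 ≤ Δ) (hm : Δ ≤ m) :
    (∑' k : ℤ, if m ≤ k then lapPMF ε k else 0) < Real.exp (-(ε * Δ)) := by
  rw [tail_sum ε hε m (le_trans hΔ hm)]
  have hq0 : 0 < Real.exp (-ε) := Real.exp_pos _
  have h1 : Real.exp (-(ε * m)) ≤ Real.exp (-(ε * Δ)) := by
    apply Real.exp_le_exp.mpr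
    have : (Δ:ℝ) ≤ (m:ℝ) := by exact_mod_cast hm
    nlinarith
  have h2 : (1:ℝ) < 1 + Real.exp (-ε) := by linarith
  calc Real.exp (-(ε * m)) / (1 + Real.exp (-ε))
      ≤ Real.exp (-(ε * Δ)) / (1 + Real.exp (-ε)) := by
        apply div_le_div_of_nonneg_right h1 (by linarith) |>.trans_eq rfl
    _ < Real.exp (-(ε * Δ)) := by
        rw [div_lt_iff₀ (by linarith)]
        nlinarith [Real.exp_pos (-(ε * Δ))]

/-- for the noisy majority election mechanism, for any profile θ and
any Δ ≥ 1, the probability that the number of voters whose preferred candidate wins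
is at most `max_{o'} #{i : θ_i = o'} − Δ` is strictly less than `e^{−εΔ}`. -/
theorem stmt8 {n : ℕ} (ε : ℝ) (hε : 0 < ε) (θ : Fin n → Bool) (Δ : ℤ) (hΔ : 1 ≤ Δ) :
    (∑' k : ℤ,
        if satisfied θ (elect θ k) ≤ max (satisfied θ true) (satisfied θ false) - Δ
        then lapPMF ε k else 0)
      < Real.exp (-(ε * Δ)) := by
  have hepos : 0 < Real.exp (-(ε * Δ)) := Real.exp_pos _
  set a := countA θ with ha
  set b := countB θ with hb
  have hsa : satisfied θ true = a := rfl
  have hsb : satisfied θ false = b := rfl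
  have hlap_nonneg : ∀ k : ℤ, 0 ≤ lapPMF ε k := by
    intro k
    have hq1 : Real.exp (-ε) < 1 := Real.exp_lt_one_iff.mpr (by linarith)
    have := Real.exp_pos (-ε)
    apply div_nonneg
    · have := Real.exp_pos (-ε * |(k:ℝ)|)
      nlinarith
    · linarith
  have helect : ∀ k : ℤ, elect θ k = decide (a - b ≥ k) := fun k => rfl
  rcases le_total b a with hba | hab
  · -- A is (weak) majority
    have hmax : max (satisfied θ true) (satisfied θ false) = a := by
      rw [hsa, hsb]; exact max_eq_left hba
    rcases lt_or_ge (a - b) Δ with hd | hd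
    · -- margin too small: probability 0
      have hzero : ∀ k : ℤ,
          (if satisfied θ (elect θ k) ≤ max (satisfied θ true) (satisfied θ false) - Δ
            then lapPMF ε k else 0) = 0 := by
        intro k
        rw [hmax, helect]
        rcases le_or_gt k (a - b) with hk | hk
        · rw [if_neg]; simp only [ge_iff_le, hk, decide_true, hsa]; omega
        · rw [if_neg]
          simp only [ge_iff_le, decide_eq_true_eq]
          rw [decide_eq_false (by omega), hsb]; omega
      rw [tsum_congr hzero]
      simpa using hepos
    · -- margin at least Δ: event is {k ≥ d+1}
      have hcong : ∀ k : ℤ,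
          (if satisfied θ (elect θ k) ≤ max (satisfied θ true) (satisfied θ false) - Δ
            then lapPMF ε k else 0) = (if a - b + 1 ≤ k then lapPMF ε k else 0) := by
        intro k
        rw [hmax, helect]
        rcases le_or_gt k (a - b) with hk | hk
        · rw [decide_eq_true hk, hsa, if_neg (by omega), if_neg (by omega)]
        · rw [decide_eq_false (by omega), hsb, if_pos (by omega), if_pos (by omega)]
      rw [tsum_congr hcong]
      exact tail_lt ε hε (a - b + 1) Δ hΔ (by omega)
  · -- B is majority
    have hmax : max (satisfied θ true) (satisfied θ false) = b := by
      rw [hsa, hsb]; exact max_eq_right hab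
    rcases lt_or_ge (b - a) Δ with hd | hd
    · have hzero : ∀ k : ℤ,
          (if satisfied θ (elect θ k) ≤ max (satisfied θ true) (satisfied θ false) - Δ
            then lapPMF ε k else 0) = 0 := by
        intro k
        rw [hmax, helect]
        rcases le_or_gt k (a - b) with hk | hk
        · rw [decide_eq_true hk, hsa, if_neg (by omega)]
        · rw [decide_eq_false (by omega), hsb, if_neg (by omega)]
      rw [tsum_congr hzero]
      simpa using hepos
    · have hcong : ∀ k : ℤ,
          (if satisfied θ (elect θ k) ≤ max (satisfied θ true) (satisfied θ false) - Δ
            then lapPMF ε k else 0) = (if b - a ≤ -k then lapPMF ε k else 0) := by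
        intro k
        rw [hmax, helect]
        rcases le_or_gt k (a - b) with hk | hk
        · rw [decide_eq_true hk, hsa, if_pos (by omega), if_pos (by omega)]
        · rw [decide_eq_false (by omega), hsb, if_neg (by omega), if_neg (by omega)]
      rw [tsum_congr hcong]
      have hneg : (∑' k : ℤ, if b - a ≤ -k then lapPMF ε k else 0)
          = ∑' k : ℤ, if b - a ≤ k then lapPMF ε k else 0 := by
        rw [← (Equiv.neg ℤ).tsum_eq (fun k => if b - a ≤ k then lapPMF ε k else 0)]
        apply tsum_congr
        intro k
        simp only [Equiv.neg_apply, neg_neg, lapPMF_neg]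
      rw [hneg]
      exact tail_lt ε hε (b - a) Δ hΔ hd
end

section
/- For the noisy majority election mechanism, the expected number of voters whose preferred candidate wins is greater than max_{o'∈{A,B}} #{i : θ_i = o'} − 1/ε. -/
open Finset

lemma lap_eq (ε : ℝ) (k : ℤ) :
    lapPMF ε k = Real.exp (-ε) ^ k.natAbs * ((1 - Real.exp (-ε)) / (1 + Real.exp (-ε))) := by
  unfold lapPMF
  rw [mul_div_assoc]
  congr 1
  rw [← Int.cast_abs, Int.abs_eq_natAbs, Int.cast_natCast, mul_comm, Real.exp_nat_mul]

lemma key_bound {ε : ℝ} (hε : 0 < ε) (m : ℕ) :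
    (m : ℝ) * Real.exp (-ε) ^ m / (1 + Real.exp (-ε)) < 1 / ε := by
  have hE : (0:ℝ) < Real.exp (ε * m) := Real.exp_pos _
  have hq0 : (0:ℝ) < Real.exp (-ε) := Real.exp_pos _
  have he1 : (1:ℝ) < Real.exp 1 := by nlinarith [Real.add_one_lt_exp (one_ne_zero)]
  have hq : Real.exp (-ε) ^ m = (Real.exp (ε * m))⁻¹ := by
    rw [← Real.exp_nat_mul, ← Real.exp_neg]; ring_nf
  have h1 : ε * m * Real.exp 1 ≤ Real.exp (ε * m) := by
    have h := Real.add_one_le_exp (ε * m - 1)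
    rw [Real.exp_sub] at h
    have hepos : (0:ℝ) < Real.exp 1 := Real.exp_pos 1
    calc ε * m * Real.exp 1 ≤ (Real.exp (ε*m)/Real.exp 1) * Real.exp 1 := by
          apply mul_le_mul_of_nonneg_right _ hepos.le; linarith
      _ = Real.exp (ε*m) := by field_simp
  have h2 : (m:ℝ) * Real.exp (-ε) ^ m * (Real.exp 1 * ε) ≤ 1 := by
    rw [hq]
    have hinv : (0:ℝ) ≤ (Real.exp (ε*m))⁻¹ := by positivity
    nlinarith [mul_inv_cancel₀ hE.ne']
  have hP : (0:ℝ) ≤ (m:ℝ) * Real.exp (-ε) ^ m := by positivity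
  rw [div_lt_div_iff₀ (by linarith) hε]
  nlinarith [mul_nonneg (mul_nonneg hP hε.le) (by linarith : (0:ℝ) ≤ Real.exp 1 - 1)]

lemma lap_total {ε : ℝ} (hε : 0 < ε) : HasSum (fun k : ℤ => lapPMF ε k) 1 := by
  set q := Real.exp (-ε) with hqdef
  have hq0 : (0:ℝ) < q := Real.exp_pos _
  have hq1 : q < 1 := by rw [hqdef, Real.exp_lt_one_iff]; linarith
  set c : ℝ := (1 - q) / (1 + q) with hc
  have hpos : HasSum (fun n : ℕ => lapPMF ε n) ((1 - q)⁻¹ * c) := by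
    have := (hasSum_geometric_of_lt_one hq0.le hq1).mul_right c
    rw [mul_comm] at this ⊢
    convert this using 2 with n
    case e'_3 => rfl
    rw [lap_eq]
    rfl
  have hneg : HasSum (fun n : ℕ => lapPMF ε (-((n:ℤ) + 1))) (q * ((1 - q)⁻¹ * c)) := by
    have := (((hasSum_geometric_of_lt_one hq0.le hq1).mul_right c).mul_left q)
    convert this using 2 with n
    case e'_3 => rfl
    rw [lap_eq]
    have : (-((n:ℤ) + 1)).natAbs = n + 1 := by omega
    rw [this]
    ring
  have h := HasSum.of_nat_of_neg_add_one hpos hneg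
  have heq : (1 - q)⁻¹ * c + q * ((1 - q)⁻¹ * c) = 1 := by
    have h1 : (1:ℝ) - q ≠ 0 := by linarith
    have h2 : (1:ℝ) + q ≠ 0 := by linarith
    rw [hc]
    field_simp
  rwa [heq] at h

lemma lap_shift {ε : ℝ} (hε : 0 < ε) (m : ℕ) (f : ℕ → ℤ) (hf : ∀ j, (f j).natAbs = m + j) :
    HasSum (fun j : ℕ => lapPMF ε (f j)) (Real.exp (-ε) ^ m / (1 + Real.exp (-ε))) := by
  set q := Real.exp (-ε) with hqdef
  have hq0 : (0:ℝ) < q := Real.exp_pos _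
  have hq1 : q < 1 := by rw [hqdef, Real.exp_lt_one_iff]; linarith
  have h1 : (1:ℝ) - q ≠ 0 := by linarith
  have h2 : (1:ℝ) + q ≠ 0 := by linarith
  have := (hasSum_geometric_of_lt_one hq0.le hq1).mul_left (q ^ m * ((1 - q) / (1 + q)))
  have hsum : q ^ m / (1 + q) = q ^ m * ((1 - q) / (1 + q)) * (1 - q)⁻¹ := by
    field_simp
  rw [hsum]
  convert this using 1
  case e'_3 => rfl
  funext j
  rw [lap_eq, hf j, pow_add]; ring

lemma countA_eq {n : ℕ} (θ : Fin n → Bool) : countA θ = satisfied θ true := rfl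

lemma countB_eq {n : ℕ} (θ : Fin n → Bool) : countB θ = satisfied θ false := rfl

/-- for the noisy majority election mechanism, the expected number of
voters whose preferred candidate wins exceeds `max_{o'} #{i : θ_i = o'} − 1/ε`. -/
theorem stmt9 {n : ℕ} (ε : ℝ) (hε : 0 < ε) (θ : Fin n → Bool) :
    (∑' k : ℤ, lapPMF ε k * (satisfied θ (elect θ k) : ℝ))
      > (max (satisfied θ true) (satisfied θ false) : ℝ) - 1 / ε := by
  classical
  set q := Real.exp (-ε) with hqdef
  have hq0 : (0:ℝ) < q := Real.exp_pos _
  have hq1 : q < 1 := by rw [hqdef, Real.exp_lt_one_iff]; linarith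
  set a := satisfied θ true with ha
  set b := satisfied θ false with hb
  set d : ℤ := a - b with hd
  have helem : ∀ k : ℤ, (satisfied θ (elect θ k) : ℝ) = if k ≤ d then (a:ℝ) else (b:ℝ) := by
    intro k
    by_cases h : k ≤ d
    · have he : elect θ k = true := by
        rw [elect, countA_eq, countB_eq, decide_eq_true_iff]
        exact h
      rw [he, if_pos h, ha]
    · have he : elect θ k = false := by
        rw [elect, countA_eq, countB_eq, decide_eq_false_iff_not]
        exact h
      rw [he, if_neg h, hb]
  rcases le_or_gt 0 d with hd0 | hd0
  · -- d ≥ 0 : winner is a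
    set m : ℕ := d.toNat with hm
    have hdm : (d:ℝ) = (m:ℝ) := by
      have h := Int.toNat_of_nonneg hd0
      rw [hm]
      exact_mod_cast h.symm
    set g : ℤ → ℝ := fun k => if d + 1 ≤ k then lapPMF ε k * ((a:ℝ) - (b:ℝ)) else 0 with hgdef
    have hginj : Function.Injective (fun j : ℕ => d + 1 + (j:ℤ)) := by
      intro x y h; simpa using h
    have hg0 : ∀ x ∉ Set.range (fun j : ℕ => d + 1 + (j:ℤ)), g x = 0 := by
      intro x hx
      rw [hgdef]
      dsimp only
      rw [if_neg]
      intro hc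
      exact hx ⟨(x - (d+1)).toNat, by simp; omega⟩
    have hcomp : HasSum (fun j : ℕ => g (d + 1 + j)) (q^(m+1)/(1+q) * ((a:ℝ)-(b:ℝ))) := by
      have := (lap_shift hε (m+1) (fun j => d + 1 + j) (by intro j; show (d + 1 + (j:ℤ)).natAbs = m + 1 + j; omega)).mul_right ((a:ℝ)-(b:ℝ))
      convert this using 2 with j
      case e'_3 => rfl
      rw [hgdef]; dsimp only; rw [if_pos (by omega)]
    have hg : HasSum g (q^(m+1)/(1+q) * ((a:ℝ)-(b:ℝ))) := (hginj.hasSum_iff hg0).mp hcomp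
    have htot : HasSum (fun k : ℤ => lapPMF ε k * (a:ℝ)) ((a:ℝ)) := by
      simpa using (lap_total hε).mul_right (a:ℝ)
    have hmain : HasSum (fun k : ℤ => lapPMF ε k * (satisfied θ (elect θ k):ℝ))
        ((a:ℝ) - q^(m+1)/(1+q)*((a:ℝ)-(b:ℝ))) := by
      have hsub := htot.sub hg
      convert hsub using 2 with k
      case e'_3 => rfl
      rw [helem k, hgdef]
      dsimp only
      by_cases h : k ≤ d
      · rw [if_pos h, if_neg (by omega)]; ring
      · rw [if_neg h, if_pos (by omega)]; ring
    rw [hmain.tsum_eq]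
    have hmax : ((a:ℝ)) ⊔ ((b:ℝ)) = (a:ℝ) := max_eq_left (by exact_mod_cast (by omega : b ≤ a))
    rw [hmax]
    have hab : ((a:ℝ) - (b:ℝ)) = (d:ℝ) := by rw [hd]; push_cast; ring
    have hkey := key_bound hε (m+1)
    have hle : q^(m+1)/(1+q) * (d:ℝ) ≤ ((m+1:ℕ):ℝ) * q^(m+1)/(1+q) := by
      rw [hdm, div_mul_eq_mul_div, mul_comm]
      gcongr
      linarith
    rw [hab]
    rw [← hqdef] at hkey
    linarith
  · -- d < 0 : winner is b
    set m : ℕ := (-d).toNat with hm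
    have hdm : ((b:ℝ) - (a:ℝ)) = (m:ℝ) := by
      have : (m:ℤ) = b - a := by omega
      have := congrArg (fun z : ℤ => (z:ℝ)) this
      push_cast at this
      linarith
    set g : ℤ → ℝ := fun k => if k ≤ d then lapPMF ε k * ((a:ℝ) - (b:ℝ)) else 0 with hgdef
    have hginj : Function.Injective (fun j : ℕ => d - (j:ℤ)) := by
      intro x y h; simp at h; omega
    have hg0 : ∀ x ∉ Set.range (fun j : ℕ => d - (j:ℤ)), g x = 0 := by
      intro x hx
      rw [hgdef]
      dsimp only
      rw [if_neg]
      intro hc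
      exact hx ⟨(d - x).toNat, by simp; omega⟩
    have hcomp : HasSum (fun j : ℕ => g (d - j)) (q^m/(1+q) * ((a:ℝ)-(b:ℝ))) := by
      have := (lap_shift hε m (fun j => d - j) (by intro j; show (d - (j:ℤ)).natAbs = m + j; omega)).mul_right ((a:ℝ)-(b:ℝ))
      convert this using 2 with j
      case e'_3 => rfl
      rw [hgdef]; dsimp only; rw [if_pos (by omega)]
    have hg : HasSum g (q^m/(1+q) * ((a:ℝ)-(b:ℝ))) := (hginj.hasSum_iff hg0).mp hcomp
    have htot : HasSum (fun k : ℤ => lapPMF ε k * (b:ℝ)) ((b:ℝ)) := by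
      simpa using (lap_total hε).mul_right (b:ℝ)
    have hmain : HasSum (fun k : ℤ => lapPMF ε k * (satisfied θ (elect θ k):ℝ))
        ((b:ℝ) + q^m/(1+q)*((a:ℝ)-(b:ℝ))) := by
      have hadd := htot.add hg
      convert hadd using 2 with k
      rw [helem k, hgdef]
      dsimp only
      by_cases h : k ≤ d
      · rw [if_pos h, if_pos h]; ring
      · rw [if_neg h, if_neg h]; ring
    rw [hmain.tsum_eq]
    have hmax : ((a:ℝ)) ⊔ ((b:ℝ)) = (b:ℝ) := max_eq_right (by exact_mod_cast (by omega : a ≤ b))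
    rw [hmax]
    have hkey := key_bound hε m
    rw [← hqdef] at hkey
    have heq2 : q^m/(1+q)*((a:ℝ)-(b:ℝ)) = -((m:ℝ) * q^m / (1+q)) := by
      have : ((a:ℝ)-(b:ℝ)) = -((m:ℝ)) := by linarith
      rw [this]; ring
    rw [heq2]
    linarith
end

section
/- The noisy-histogram median mechanism for discrete facility location is ε-differentially private: for any two report profiles differing in one player's report, and any output location ℓ_j, the probabilities of outputting ℓ_j differ by a factor of at most e^ε. -/
open Finset

/-- `Med z` is the minimum `k` with `Σ_{i≤k} z_i ≥ Σ_{i>k} z_i` (the set of such `k`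
is always nonempty since `k` maximal works). -/
def Med {q : ℕ} (z : Fin (q + 1) → ℕ) : Fin (q + 1) :=
  if h : (univ.filter (fun k : Fin (q + 1) =>
      ∑ i ∈ univ.filter (fun i => i ≤ k), z i ≥ ∑ i ∈ univ.filter (fun i => k < i), z i)).Nonempty
  then (univ.filter (fun k : Fin (q + 1) =>
      ∑ i ∈ univ.filter (fun i => i ≤ k), z i ≥ ∑ i ∈ univ.filter (fun i => k < i), z i)).min' h
  else 0

/-- Histogram of reported types. -/
def hist {n q : ℕ} (θ : Fin n → Fin (q + 1)) : Fin (q + 1) → ℕ :=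
  fun j => (univ.filter (fun i => θ i = j)).card

/-- Geometric-type noise pmf on ℕ: `Pr[r=k] = (1−e^{−ε/2})·e^{−εk/2}`. -/
noncomputable def geoPMF (ε : ℝ) (k : ℕ) : ℝ :=
  (1 - Real.exp (-ε / 2)) * Real.exp (-ε * k / 2)

/-- Product pmf of independent geometric noises. -/
noncomputable def noisePMF {q : ℕ} (ε : ℝ) (r : Fin (q + 1) → ℕ) : ℝ :=
  ∏ j, geoPMF ε (r j)

/- ### Auxiliary lemmas about the median -/

def medSet {q : ℕ} (z : Fin (q + 1) → ℕ) : Finset (Fin (q + 1)) :=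
  univ.filter (fun k : Fin (q + 1) =>
      ∑ i ∈ univ.filter (fun i => i ≤ k), z i ≥ ∑ i ∈ univ.filter (fun i => k < i), z i)

lemma medSet_nonempty {q : ℕ} (z : Fin (q + 1) → ℕ) : (medSet z).Nonempty := by
  refine ⟨Fin.last q, ?_⟩
  simp only [medSet, mem_filter, mem_univ, true_and, ge_iff_le]
  have : (univ.filter (fun i : Fin (q+1) => Fin.last q < i)) = ∅ := by
    apply Finset.filter_false_of_mem
    intro i _
    exact not_lt.mpr (Fin.le_last i)
  rw [this]
  simp

lemma med_eq_min' {q : ℕ} (z : Fin (q + 1) → ℕ) :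
    Med z = (medSet z).min' (medSet_nonempty z) := by
  unfold Med
  exact dif_pos (medSet_nonempty z)

lemma med_mem {q : ℕ} (z : Fin (q + 1) → ℕ) : Med z ∈ medSet z := by
  rw [med_eq_min']; exact Finset.min'_mem _ _

lemma med_le {q : ℕ} {z : Fin (q + 1) → ℕ} {k : Fin (q+1)} (hk : k ∈ medSet z) :
    Med z ≤ k := by
  rw [med_eq_min']; exact Finset.min'_le _ _ hk

lemma med_eq_of {q : ℕ} {z : Fin (q + 1) → ℕ} {j : Fin (q+1)}
    (hj : j ∈ medSet z) (hmin : ∀ k ∈ medSet z, j ≤ k) : Med z = j :=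
  le_antisymm (med_le hj) (hmin _ (med_mem z))

lemma mem_medSet_iff {q : ℕ} {z : Fin (q + 1) → ℕ} {k : Fin (q+1)} :
    k ∈ medSet z ↔
      ∑ i ∈ univ.filter (fun i => k < i), z i ≤ ∑ i ∈ univ.filter (fun i => i ≤ k), z i := by
  simp [medSet]

lemma sum_indicator_le {q : ℕ} (c k : Fin (q+1)) :
    ∑ i ∈ univ.filter (fun i => i ≤ k), (if i = c then 1 else 0) = if c ≤ k then 1 else 0 := by
  rw [Finset.sum_ite_eq' (univ.filter (fun i => i ≤ k)) c (fun _ => 1)]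
  simp

lemma sum_indicator_gt {q : ℕ} (c k : Fin (q+1)) :
    ∑ i ∈ univ.filter (fun i => k < i), (if i = c then 1 else 0) = if k < c then 1 else 0 := by
  rw [Finset.sum_ite_eq' (univ.filter (fun i => k < i)) c (fun _ => 1)]
  simp

/-- Key lemma: adding one unit at any coordinate `c` and one unit at the median
coordinate `j` preserves the median. -/
lemma med_add {q : ℕ} (z : Fin (q + 1) → ℕ) (c j : Fin (q+1)) (hz : Med z = j) :
    Med (fun i => z i + ((if i = c then 1 else 0) + (if i = j then 1 else 0))) = j := by
  set z' : Fin (q+1) → ℕ := fun i => z i + ((if i = c then 1 else 0) + (if i = j then 1 else 0)) with hz'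
  have hL : ∀ k, ∑ i ∈ univ.filter (fun i => i ≤ k), z' i
      = (∑ i ∈ univ.filter (fun i => i ≤ k), z i)
        + ((if c ≤ k then 1 else 0) + (if j ≤ k then 1 else 0)) := by
    intro k
    rw [hz']
    rw [Finset.sum_add_distrib, Finset.sum_add_distrib, sum_indicator_le, sum_indicator_le]
  have hR : ∀ k, ∑ i ∈ univ.filter (fun i => k < i), z' i
      = (∑ i ∈ univ.filter (fun i => k < i), z i)
        + ((if k < c then 1 else 0) + (if k < j then 1 else 0)) := by
    intro k
    rw [hz']
    rw [Finset.sum_add_distrib, Finset.sum_add_distrib, sum_indicator_gt, sum_indicator_gt]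
  have hjmem : j ∈ medSet z := hz ▸ med_mem z
  have hjmin : ∀ k ∈ medSet z, j ≤ k := fun k hk => hz ▸ med_le hk
  apply med_eq_of
  · rw [mem_medSet_iff, hL, hR]
    rw [mem_medSet_iff] at hjmem
    rw [if_pos (le_refl j), if_neg (lt_irrefl j)]
    by_cases hcj : c ≤ j
    · rw [if_pos hcj, if_neg (not_lt.mpr hcj)]
      omega
    · rw [if_neg hcj, if_pos (not_le.mp hcj)]
      omega
  · intro k hk
    by_contra hlt
    push_neg at hlt
    have hknot : k ∉ medSet z := fun h => absurd (hjmin k h) (not_le.mpr hlt)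
    rw [mem_medSet_iff] at hknot hk
    push_neg at hknot
    rw [hL, hR] at hk
    rw [if_neg (not_le.mpr hlt), if_pos hlt] at hk
    by_cases hck : c ≤ k
    · rw [if_pos hck, if_neg (not_lt.mpr hck)] at hk
      omega
    · rw [if_neg hck, if_pos (not_le.mp hck)] at hk
      omega

/- ### Auxiliary lemmas about histograms and the pmf -/

lemma hist_update {n q : ℕ} (θ : Fin n → Fin (q + 1)) (i : Fin n) (s : Fin (q+1))
    (j : Fin (q+1)) :
    hist (Function.update θ i s) j
      = ((univ.erase i).filter (fun i' => θ i' = j)).card + (if s = j then 1 else 0) := by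
  unfold hist
  have hmem : i ∈ (univ : Finset (Fin n)) := mem_univ i
  conv_lhs => rw [← Finset.insert_erase hmem, Finset.filter_insert]
  have hfe : (univ.erase i).filter (fun i' => Function.update θ i s i' = j)
      = (univ.erase i).filter (fun i' => θ i' = j) := by
    apply Finset.filter_congr
    intro i' hi'
    rw [Function.update_of_ne (Finset.ne_of_mem_erase hi')]
  rw [Function.update_self]
  by_cases hs : s = j
  · rw [if_pos hs, if_pos hs, hfe, Finset.card_insert_of_notMem]
    intro hmem'
    exact (Finset.notMem_erase i univ) (Finset.mem_of_mem_filter _ hmem')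
  · rw [if_neg hs, if_neg hs, hfe, add_zero]

lemma geoPMF_eq (ε : ℝ) (k : ℕ) :
    geoPMF ε k = (1 - Real.exp (-ε / 2)) * (Real.exp (-ε / 2)) ^ k := by
  unfold geoPMF
  rw [← Real.exp_nat_mul]
  ring_nf

lemma noisePMF_eq {q : ℕ} (ε : ℝ) (r : Fin (q + 1) → ℕ) :
    noisePMF ε r
      = (1 - Real.exp (-ε / 2)) ^ (q + 1) * (Real.exp (-ε / 2)) ^ (∑ j, r j) := by
  unfold noisePMF
  simp_rw [geoPMF_eq]
  rw [Finset.prod_mul_distrib, Finset.prod_const, Finset.prod_pow_eq_pow_sum]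
  simp

set_option maxHeartbeats 1000000 in
lemma summable_pow_sum {x : ℝ} (hx0 : 0 ≤ x) (hx1 : x < 1) :
    ∀ m : ℕ, Summable (fun r : Fin m → ℕ => x ^ (∑ j, r j)) := by
  intro m
  induction m with
  | zero =>
      have h := Set.Finite.summable (Set.finite_univ (α := Fin 0 → ℕ))
        (fun r => x ^ (∑ j, r j))
      exact (summable_subtype_iff_indicator.1 h).congr (by intro b; simp)
  | succ m ih =>
      have hgeo : Summable (fun k : ℕ => x ^ k) := summable_geometric_of_lt_one hx0 hx1
      have h1 : (0:ℕ → ℝ) ≤ (fun k : ℕ => x ^ k) := fun k => pow_nonneg hx0 k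
      have h2 : (0:(Fin m → ℕ) → ℝ) ≤ (fun r => x ^ (∑ j, r j)) := fun r => pow_nonneg hx0 _
      have hprod := Summable.mul_of_nonneg hgeo ih h1 h2
      have := (Fin.consEquiv (fun _ : Fin (m+1) => ℕ)).symm.summable_iff.2 hprod
      apply this.congr
      intro r
      simp only [Fin.consEquiv_symm_apply, Function.comp]
      rw [Fin.sum_univ_succ (f := r), pow_add]
      rfl

/- ### The main theorem -/

set_option maxHeartbeats 2000000 in
/-- the noisy-histogram median mechanism is ε-differentially private:
for any two report profiles differing in one player's report and any output location
`j*`, the probabilities of outputting `j*` differ by a factor of at most `e^ε`. -/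
theorem stmt11 {n q : ℕ} (ε : ℝ) (hε : 0 < ε)
    (θ : Fin n → Fin (q + 1)) (i : Fin n) (t t' : Fin (q + 1)) (jstar : Fin (q + 1)) :
    (∑' r : Fin (q + 1) → ℕ,
        if Med (fun j => hist (Function.update θ i t) j + r j) = jstar
        then noisePMF ε r else 0)
      ≤ Real.exp ε *
        ∑' r : Fin (q + 1) → ℕ,
          if Med (fun j => hist (Function.update θ i t') j + r j) = jstar
          then noisePMF ε r else 0 := by
  classical
  have hx0 : (0:ℝ) < Real.exp (-ε/2) := Real.exp_pos _
  have hx1 : Real.exp (-ε/2) < 1 := by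
    rw [Real.exp_lt_one_iff]; linarith
  set x : ℝ := Real.exp (-ε/2) with hxdef
  set C : ℝ := (1 - x) ^ (q + 1) with hCdef
  have hC0 : (0:ℝ) ≤ C := pow_nonneg (by linarith) _
  have hP : ∀ r : Fin (q+1) → ℕ, noisePMF ε r = C * x ^ (∑ j, r j) := by
    intro r
    rw [noisePMF_eq]
  have hPnn : ∀ r : Fin (q+1) → ℕ, 0 ≤ noisePMF ε r := by
    intro r
    rw [hP]
    positivity
  have hPsum : Summable (fun r : Fin (q+1) → ℕ => noisePMF ε r) := by
    have := (summable_pow_sum hx0.le hx1 (q+1)).mul_left C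
    exact this.congr (fun r => (hP r).symm)
  have hexp1 : (1:ℝ) ≤ Real.exp ε := by
    rw [Real.one_le_exp_iff]; linarith
  by_cases hne : t = t'
  · subst hne
    apply le_mul_of_one_le_left _ hexp1
    apply tsum_nonneg
    intro r
    split
    · exact hPnn r
    · exact le_refl 0
  -- main case: t ≠ t'
  set h : Fin (q+1) → ℕ := fun j => hist (Function.update θ i t) j with hhdef
  set h' : Fin (q+1) → ℕ := fun j => hist (Function.update θ i t') j with hh'def
  set B : Fin (q+1) → ℕ := fun j => ((univ.erase i).filter (fun i' => θ i' = j)).card with hBdef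
  have hh : ∀ j, h j = B j + (if j = t then 1 else 0) := by
    intro j
    rw [show h j = hist (Function.update θ i t) j from rfl, hist_update θ i t j]
    congr 1
    by_cases hj : j = t
    · rw [if_pos hj, if_pos hj.symm]
    · rw [if_neg hj, if_neg (fun hc => hj hc.symm)]
  have hh' : ∀ j, h' j = B j + (if j = t' then 1 else 0) := by
    intro j
    rw [show h' j = hist (Function.update θ i t') j from rfl, hist_update θ i t' j]
    congr 1
    by_cases hj : j = t'
    · rw [if_pos hj, if_pos hj.symm]
    · rw [if_neg hj, if_neg (fun hc => hj hc.symm)]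
  set E : Set (Fin (q+1) → ℕ) := {r | Med (fun j => h j + r j) = jstar} with hEdef
  -- the "orbit" predicate
  set InO : (Fin (q+1) → ℕ) → Prop := fun r => ∃ (w : Fin (q+1) → ℕ) (k : ℕ),
      Med w = jstar ∧ w t' = h t' ∧
      (∀ j, h j + r j = w j + k * ((if j = t' then 1 else 0) + (if j = jstar then 1 else 0)))
    with hInOdef
  -- the injection
  set ι : E → (Fin (q+1) → ℕ) := fun rp =>
      if InO rp.val
      then (fun j => rp.val j + ((if j = t then 1 else 0) + (if j = jstar then 1 else 0)))
      else (fun j => rp.val j + (if j = t then 1 else 0) - (if j = t' then 1 else 0))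
    with hιdef
  -- fact (A): outside the orbit the t'-noise is positive
  have hA : ∀ rp : E, ¬ InO rp.val → 1 ≤ rp.val t' := by
    intro rp hno
    by_contra hzero
    push_neg at hzero
    have h0 : rp.val t' = 0 := by omega
    exact hno ⟨fun j => h j + rp.val j, 0, rp.property, by simp [h0], fun j => by simp⟩
  -- fact (B): orbit closed under adding δ
  have hB2 : ∀ r1 r2 : Fin (q+1) → ℕ,
      (∀ j, r2 j = r1 j + ((if j = t' then 1 else 0) + (if j = jstar then 1 else 0))) →
      InO r1 → InO r2 := by
    rintro r1 r2 hδ ⟨w, k, hw1, hw2, hw3⟩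
    refine ⟨w, k + 1, hw1, hw2, fun j => ?_⟩
    have h3 := hw3 j
    have h4 := hδ j
    have hexpand : (k+1) * ((if j = t' then 1 else 0) + (if j = jstar then 1 else 0))
        = k * ((if j = t' then 1 else 0) + (if j = jstar then 1 else 0))
          + ((if j = t' then 1 else 0) + (if j = jstar then 1 else 0)) := by ring
    omega
  -- fact (C): the image satisfies the event for h'
  have hmapmem : ∀ rp : E, Med (fun j => h' j + ι rp j) = jstar := by
    intro rp
    by_cases hio : InO rp.val
    · have hfun : (fun j => h' j + ι rp j)
          = (fun j => (h j + rp.val j) + ((if j = t' then 1 else 0) + (if j = jstar then 1 else 0))) := by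
        funext j
        simp only [hιdef, if_pos hio]
        rw [hh j, hh' j]
        split_ifs <;> omega
      rw [hfun]
      exact med_add (fun j => h j + rp.val j) t' jstar rp.property
    · have h1r : 1 ≤ rp.val t' := hA rp hio
      have hfun : (fun j => h' j + ι rp j) = (fun j => h j + rp.val j) := by
        funext j
        simp only [hιdef, if_neg hio]
        rw [hh j, hh' j]
        rcases eq_or_ne j t' with hj2 | hj2
        · subst hj2
          split_ifs <;> omega
        · split_ifs <;> omega
      rw [hfun]
      exact rp.property
  -- cost bound
  have hsum2 : ∀ rp : E, InO rp.val → (∑ j, ι rp j) = (∑ j, rp.val j) + 2 := by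
    intro rp hio
    simp only [hιdef, if_pos hio]
    rw [Finset.sum_add_distrib, Finset.sum_add_distrib]
    rw [Finset.sum_ite_eq' univ t (fun _ => 1), Finset.sum_ite_eq' univ jstar (fun _ => 1)]
    simp
  have hsum0 : ∀ rp : E, ¬ InO rp.val → (∑ j, ι rp j) = (∑ j, rp.val j) := by
    intro rp hio
    have h1r : 1 ≤ rp.val t' := hA rp hio
    have hpt : ∀ j, ι rp j + (if j = t' then 1 else 0) = rp.val j + (if j = t then 1 else 0) := by
      intro j
      simp only [hιdef, if_neg hio]
      rcases eq_or_ne j t' with hj2 | hj2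
      · subst hj2
        split_ifs <;> omega
      · split_ifs <;> omega
    have hsums : (∑ j, ι rp j) + (∑ j : Fin (q+1), (if j = t' then 1 else 0))
        = (∑ j, rp.val j) + (∑ j : Fin (q+1), (if j = t then 1 else 0)) := by
      rw [← Finset.sum_add_distrib, ← Finset.sum_add_distrib]
      exact Finset.sum_congr rfl (fun j _ => hpt j)
    rw [Finset.sum_ite_eq' univ t' (fun _ => 1), Finset.sum_ite_eq' univ t (fun _ => 1)] at hsums
    simp at hsums
    omega
  have hcost : ∀ rp : E, noisePMF ε rp.val ≤ Real.exp ε * noisePMF ε (ι rp) := by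
    intro rp
    by_cases hio : InO rp.val
    · rw [hP, hP, hsum2 rp hio]
      have hxx : Real.exp ε * x ^ 2 = 1 := by
        have h2 : ((2:ℕ):ℝ) * (-ε/2) = -ε := by push_cast; ring
        rw [hxdef, ← Real.exp_nat_mul, h2, ← Real.exp_add]
        norm_num
      have : x ^ ((∑ j, rp.val j) + 2) = x ^ (∑ j, rp.val j) * x ^ 2 := pow_add x _ 2
      rw [this]
      apply le_of_eq
      calc C * x ^ (∑ j, rp.val j)
          = Real.exp ε * x ^ 2 * (C * x ^ (∑ j, rp.val j)) := by rw [hxx]; ring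
        _ = Real.exp ε * (C * (x ^ (∑ j, rp.val j) * x ^ 2)) := by ring
    · rw [hP, hP, hsum0 rp hio]
      exact le_mul_of_one_le_left (by positivity) hexp1
  -- injectivity
  have hinj : Function.Injective ι := by
    intro rp1 rp2 heq
    have heqj : ∀ j, ι rp1 j = ι rp2 j := fun j => congrFun heq j
    apply Subtype.ext
    by_cases h1 : InO rp1.val <;> by_cases h2 : InO rp2.val
    · funext j
      have := heqj j
      simp only [hιdef, if_pos h1, if_pos h2] at this
      omega
    · -- rp1 in orbit, rp2 not: derive rp2 = rp1 + δ, contradiction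
      exfalso
      have h1r : 1 ≤ rp2.val t' := hA rp2 h2
      have hδ : ∀ j, rp2.val j
          = rp1.val j + ((if j = t' then 1 else 0) + (if j = jstar then 1 else 0)) := by
        intro j
        have := heqj j
        simp only [hιdef, if_pos h1, if_neg h2] at this
        rcases eq_or_ne j t' with hj2 | hj2
        · subst hj2
          split_ifs at this ⊢ <;> omega
        · split_ifs at this ⊢ <;> omega
      exact h2 (hB2 rp1.val rp2.val hδ h1)
    · exfalso
      have h1r : 1 ≤ rp1.val t' := hA rp1 h1
      have hδ : ∀ j, rp1.val j
          = rp2.val j + ((if j = t' then 1 else 0) + (if j = jstar then 1 else 0)) := by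
        intro j
        have := heqj j
        simp only [hιdef, if_neg h1, if_pos h2] at this
        rcases eq_or_ne j t' with hj2 | hj2
        · subst hj2
          split_ifs at this ⊢ <;> omega
        · split_ifs at this ⊢ <;> omega
      exact h1 (hB2 rp2.val rp1.val hδ h2)
    · funext j
      have h1r : 1 ≤ rp1.val t' := hA rp1 h1
      have h2r : 1 ≤ rp2.val t' := hA rp2 h2
      have := heqj j
      simp only [hιdef, if_neg h1, if_neg h2] at this
      rcases eq_or_ne j t' with hj2 | hj2
      · subst hj2
        split_ifs at this <;> omega
      · split_ifs at this <;> omega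
  -- assemble
  have hLHS : (∑' r : Fin (q + 1) → ℕ,
      if Med (fun j => h j + r j) = jstar then noisePMF ε r else 0)
      = ∑' (r : E), noisePMF ε r.val := by
    rw [tsum_subtype E (fun r => noisePMF ε r)]
    apply tsum_congr
    intro r
    rw [Set.indicator_apply]
    congr 1
  have hsumf : Summable (fun rp : E => noisePMF ε rp.val) := hPsum.subtype E
  set g : (Fin (q+1) → ℕ) → ℝ := fun r =>
      Real.exp ε * (if Med (fun j => h' j + r j) = jstar then noisePMF ε r else 0) with hgdef
  have hgnn : ∀ r, 0 ≤ g r := by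
    intro r
    simp only [hgdef]
    split
    · exact mul_nonneg (Real.exp_pos ε).le (hPnn _)
    · simp
  have hsumg : Summable g := by
    have hle : ∀ r, g r ≤ Real.exp ε * noisePMF ε r := by
      intro r
      simp only [hgdef]
      apply mul_le_mul_of_nonneg_left _ (Real.exp_pos ε).le
      split
      · exact le_refl _
      · exact hPnn r
    exact Summable.of_nonneg_of_le hgnn hle (hPsum.mul_left _)
  have hmain : (∑' (r : E), noisePMF ε r.val) ≤ ∑' r, g r := by
    apply Summable.tsum_le_tsum_of_inj ι hinj (fun c _ => hgnn c) _ hsumf hsumg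
    intro rp
    simp only [hgdef]
    rw [if_pos (hmapmem rp)]
    exact hcost rp
  calc (∑' r : Fin (q + 1) → ℕ,
      if Med (fun j => h j + r j) = jstar then noisePMF ε r else 0)
      = ∑' (r : E), noisePMF ε r.val := hLHS
    _ ≤ ∑' r, g r := hmain
    _ = Real.exp ε * ∑' r : Fin (q + 1) → ℕ,
        (if Med (fun j => h' j + r j) = jstar then noisePMF ε r else 0) := tsum_mul_left
end

section
/- In the noisy VCG mechanism, for every fixed noise r, if the selected outcomes under reports θ_i and θ_i' differ, then the truthful quasi-linear utility exceeds the misreport's utility by at least 1/|O|: Uo(θ_i, o*) − P(θ_i, outcome info) − (Uo(θ_i, o') − P(θ_i', outcome info)) ≥ 1/|O|. -/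
open Finset

noncomputable def Vscore {Θ : Type*} {n m : ℕ} (Uo : Θ → Fin (m + 1) → ℕ)
    (lam : Fin (m + 1) → ℤ) (θ : Fin n → Θ) (o : Fin (m + 1)) : ℝ :=
  (∑ j, (Uo (θ j) o : ℝ)) + (lam o : ℝ) + (o : ℝ) / (m + 1 : ℝ)

noncomputable def payment {Θ : Type*} {m : ℕ} (Uo : Θ → Fin (m + 1) → ℕ)
    (t : Θ) (V : Fin (m + 1) → ℝ) (ostar : Fin (m + 1)) : ℝ :=
  ⨆ o : Fin (m + 1), ((Uo t ostar : ℝ) - (Uo t o : ℝ) - (V ostar - V o))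

lemma payment_eq {Θ : Type*} {m : ℕ} (Uo : Θ → Fin (m + 1) → ℕ)
    (t : Θ) (V : Fin (m + 1) → ℝ) (os : Fin (m + 1)) :
    payment Uo t V os = ((Uo t os : ℝ) - V os) + ⨆ o, (V o - (Uo t o : ℝ)) := by
  unfold payment
  rw [add_ciSup (Set.Finite.bddAbove (Set.finite_range _))]
  congr 1; ext o; ring

/-- in the noisy VCG mechanism, for every fixed noise, if the selected
outcomes under reports `θ_i` and `θ_i'` differ, then the truthful quasi-linear
utility exceeds the misreport's utility by at least `1/|O|`. -/
theorem stmt17 {Θ : Type*} {n m Mb : ℕ}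
    (Uo : Θ → Fin (m + 1) → ℕ) (hUo : ∀ t o, Uo t o ≤ Mb)
    (lam : Fin (m + 1) → ℤ) (θ : Fin n → Θ) (i : Fin n) (t' : Θ)
    (ostar o' : Fin (m + 1))
    (hstar : ∀ o, Vscore Uo lam θ o ≤ Vscore Uo lam θ ostar)
    (hstar' : ∀ o, Vscore Uo lam (Function.update θ i t') o
        ≤ Vscore Uo lam (Function.update θ i t') o')
    (hne : ostar ≠ o') :
    ((Uo (θ i) ostar : ℝ) - payment Uo (θ i) (Vscore Uo lam θ) ostar)
      - ((Uo (θ i) o' : ℝ)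
          - payment Uo t' (Vscore Uo lam (Function.update θ i t')) o')
      ≥ 1 / (m + 1 : ℝ) := by
  set V := Vscore Uo lam θ with hV
  set V' := Vscore Uo lam (Function.update θ i t') with hV'
  have hW : ∀ o, V' o - (Uo t' o : ℝ) = V o - (Uo (θ i) o : ℝ) := by
    intro o
    simp only [hV, hV', Vscore]
    have hagree : ∀ j ∈ Finset.univ.erase i,
        ((Uo (Function.update θ i t' j) o : ℝ)) = (Uo (θ j) o : ℝ) := by
      intro j hj
      rw [Function.update_of_ne (Finset.mem_erase.mp hj).1]
    have : (∑ j, (Uo (Function.update θ i t' j) o : ℝ))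
        = (∑ j, (Uo (θ j) o : ℝ)) - (Uo (θ i) o : ℝ) + (Uo t' o : ℝ) := by
      rw [← Finset.sum_erase_add _ _ (Finset.mem_univ i),
          ← Finset.sum_erase_add _ (fun j => ((Uo (θ j) o : ℝ))) (Finset.mem_univ i),
          Finset.sum_congr rfl hagree, Function.update_self]
      ring
    rw [this]; ring
  have hS : (⨆ o, (V' o - (Uo t' o : ℝ))) = ⨆ o, (V o - (Uo (θ i) o : ℝ)) := by
    congr 1; ext o; exact hW o
  rw [payment_eq, payment_eq, hS]
  have hmain : V ostar - V o' ≥ 1 / (m + 1 : ℝ) := by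
    have hle : V o' ≤ V ostar := hstar o'
    have hm1 : (0:ℝ) < (m + 1 : ℝ) := by positivity
    set k : ℤ := ((∑ j, (Uo (θ j) ostar : ℤ)) + lam ostar)
      - ((∑ j, (Uo (θ j) o' : ℤ)) + lam o') with hk
    set z : ℤ := (m + 1) * k + (ostar : ℤ) - (o' : ℤ) with hz
    have hdiff : V ostar - V o' = (z : ℝ) / (m + 1 : ℝ) := by
      simp only [hV, Vscore, hz, hk]
      push_cast
      field_simp
      ring
    have hzne : z ≠ 0 := by
      intro h0
      have hdvd : ((m:ℤ) + 1) ∣ ((ostar : ℤ) - (o' : ℤ)) := by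
        refine ⟨-k, ?_⟩
        linear_combination h0
      have h1 : (ostar : ℤ) < m + 1 := by exact_mod_cast ostar.isLt
      have h2 : (o' : ℤ) < m + 1 := by exact_mod_cast o'.isLt
      have h3 : (0:ℤ) ≤ (ostar : ℤ) := by positivity
      have h4 : (0:ℤ) ≤ (o' : ℤ) := by positivity
      have hne' : (ostar : ℤ) ≠ (o' : ℤ) := by
        simpa [Fin.ext_iff] using hne
      have hzero : (ostar : ℤ) - (o' : ℤ) = 0 :=
        Int.eq_zero_of_abs_lt_dvd hdvd (by rw [abs_sub_lt_iff]; omega)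
      omega
    have hz0 : (0:ℤ) ≤ z := by
      by_contra hneg
      push_neg at hneg
      have : (z : ℝ) / (m + 1 : ℝ) < 0 := by
        apply div_neg_of_neg_of_pos _ hm1
        exact_mod_cast hneg
      linarith [hdiff ▸ sub_nonneg.mpr hle]
    have hz1 : (1:ℤ) ≤ z := by omega
    rw [hdiff, ge_iff_le]
    have : (1:ℝ) ≤ (z:ℝ) := by exact_mod_cast hz1
    gcongr
  linarith [hmain, hW o']
end

section
/- For the noisy VCG mechanism's output, for every profile θ and Δ > 0: Pr[Σ_i Uo(θ_i, o*) < max_{o'} Σ_i Uo(θ_i, o') − Δ] ≤ 2|O|·exp(−εΔ/(2M·|O|)), where o* is the selected outcome. -/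
set_option maxHeartbeats 1000000

open Finset

/-- An outcome maximizing `V`. -/
noncomputable def argmaxV {m : ℕ} (V : Fin (m + 1) → ℝ) : Fin (m + 1) :=
  Classical.choose (Finset.exists_max_image Finset.univ V ⟨0, Finset.mem_univ 0⟩)

/-- Normalizing constant of the discrete two-sided Laplace distribution with scale
`M·(m+1)/ε`. -/
noncomputable def lapZ (ε : ℝ) (Mb m : ℕ) : ℝ :=
  ∑' k : ℤ, Real.exp (-(ε * |(k : ℝ)|) / ((Mb : ℝ) * (m + 1 : ℝ)))

/-- The discrete two-sided Laplace pmf: `Pr[λ = k] ∝ exp(−ε|k|/(M·(m+1)))`. -/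
noncomputable def lapVCG (ε : ℝ) (Mb m : ℕ) (k : ℤ) : ℝ :=
  Real.exp (-(ε * |(k : ℝ)|) / ((Mb : ℝ) * (m + 1 : ℝ))) / lapZ ε Mb m

private lemma pi_tsum_prod : ∀ (N : ℕ) (g : Fin N → ℤ → ℝ),
    (∀ i k, 0 ≤ g i k) → (∀ i, Summable (g i)) →
    Summable (fun f : Fin N → ℤ => ∏ i, g i (f i)) ∧
      (∑' f : Fin N → ℤ, ∏ i, g i (f i)) = ∏ i, ∑' k, g i k := by
  intro N
  induction N with
  | zero =>
    intro g h0 hs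
    refine ⟨Summable.of_finite, ?_⟩
    simp
  | succ N ih =>
    intro g h0 hs
    obtain ⟨ihs, ihe⟩ := ih (fun i k => g i.succ k) (fun i k => h0 _ _) (fun i => hs _)
    have key : ∀ z : ℤ × (Fin N → ℤ),
        (∏ i, g i ((Fin.cons z.1 z.2 : Fin (N+1) → ℤ) i)) =
          g 0 z.1 * ∏ i : Fin N, g i.succ (z.2 i) := by
      intro z
      rw [Fin.prod_univ_succ]
      simp
    have hG : Summable (fun z : ℤ × (Fin N → ℤ) => g 0 z.1 * ∏ i : Fin N, g i.succ (z.2 i)) :=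
      Summable.mul_of_nonneg (f := g 0) (g := fun b : Fin N → ℤ => ∏ i : Fin N, g i.succ (b i))
        (hs 0) ihs (by intro k; exact h0 0 k)
        (by intro f; exact Finset.prod_nonneg fun i _ => h0 _ _)
    have hcomp : ((fun f : Fin (N+1) → ℤ => ∏ i, g i (f i)) ∘
        (Fin.consEquiv (fun _ : Fin (N + 1) => ℤ))) =
        fun z : ℤ × (Fin N → ℤ) => g 0 z.1 * ∏ i : Fin N, g i.succ (z.2 i) := by
      funext z
      exact key z
    have hsum : Summable (fun f : Fin (N+1) → ℤ => ∏ i, g i (f i)) := by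
      rw [← (Fin.consEquiv (fun _ : Fin (N + 1) => ℤ)).summable_iff]
      rw [hcomp]
      exact hG
    refine ⟨hsum, ?_⟩
    rw [← (Fin.consEquiv (fun _ : Fin (N + 1) => ℤ)).tsum_eq]
    calc (∑' z : ℤ × (Fin N → ℤ), (fun f : Fin (N+1) → ℤ => ∏ i, g i (f i))
            ((Fin.consEquiv (fun _ : Fin (N + 1) => ℤ)) z))
        = ∑' z : ℤ × (Fin N → ℤ), g 0 z.1 * ∏ i : Fin N, g i.succ (z.2 i) :=
          tsum_congr fun z => key z
      _ = ∑' a : ℤ, ∑' b : Fin N → ℤ, g 0 a * ∏ i : Fin N, g i.succ (b i) :=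
          Summable.tsum_prod' hG fun a => ihs.mul_left (g 0 a)
      _ = ∑' a : ℤ, g 0 a * ∑' b : Fin N → ℤ, ∏ i : Fin N, g i.succ (b i) :=
          tsum_congr fun a => tsum_mul_left
      _ = (∑' a : ℤ, g 0 a) * ∑' b : Fin N → ℤ, ∏ i : Fin N, g i.succ (b i) := tsum_mul_right
      _ = ∏ i, ∑' k, g i k := by rw [ihe, Fin.prod_univ_succ]

private lemma exists_large_noise {Θ : Type*} {n m : ℕ}
    (Uo : Θ → Fin (m + 1) → ℕ) (θ : Fin n → Θ) (lam : Fin (m + 1) → ℤ) {Δ : ℝ}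
    (hE : (∑ i, (Uo (θ i) (argmaxV (Vscore Uo lam θ)) : ℝ))
        < (⨆ o' : Fin (m + 1), ∑ i, (Uo (θ i) o' : ℝ)) - Δ) :
    ∃ o, Δ / 2 < |((lam o : ℤ) : ℝ)| := by
  obtain ⟨o₂, h2⟩ := Finite.exists_max (fun o : Fin (m + 1) => ∑ i, (Uo (θ i) o : ℝ))
  set o₁ := argmaxV (Vscore Uo lam θ) with ho₁
  have hmax : ∀ o, Vscore Uo lam θ o ≤ Vscore Uo lam θ o₁ := by
    have h := Classical.choose_spec
      (Finset.exists_max_image Finset.univ (Vscore Uo lam θ) ⟨0, Finset.mem_univ 0⟩)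
    exact fun o => h.2 o (Finset.mem_univ o)
  have hsup : (⨆ o' : Fin (m + 1), ∑ i, (Uo (θ i) o' : ℝ)) ≤ ∑ i, (Uo (θ i) o₂ : ℝ) :=
    ciSup_le h2
  have hlt : (∑ i, (Uo (θ i) o₁ : ℝ)) < (∑ i, (Uo (θ i) o₂ : ℝ)) - Δ := by
    refine hE.trans_le (by linarith)
  have hscore := hmax o₂
  unfold Vscore at hscore
  have hm1 : (0:ℝ) < (m:ℝ) + 1 := by positivity
  have hfrac1 : ((o₁ : ℕ) : ℝ) / ((m:ℝ) + 1) < 1 := by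
    rw [div_lt_one hm1]
    exact_mod_cast Nat.lt_succ_of_le o₁.is_le
  have hfrac2 : (0:ℝ) ≤ ((o₂ : ℕ) : ℝ) / ((m:ℝ) + 1) := by positivity
  have hintlt : ((∑ i, (Uo (θ i) o₂ : ℤ)) - ∑ i, (Uo (θ i) o₁ : ℤ) : ℤ)
      < (lam o₁ - lam o₂) + 1 := by
    have hr : (((∑ i, (Uo (θ i) o₂ : ℤ)) - ∑ i, (Uo (θ i) o₁ : ℤ) : ℤ) : ℝ)
        < (((lam o₁ - lam o₂) + 1 : ℤ) : ℝ) := by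
      push_cast
      linarith
    exact_mod_cast hr
  have hint : ((∑ i, (Uo (θ i) o₂ : ℤ)) - ∑ i, (Uo (θ i) o₁ : ℤ) : ℤ) ≤ lam o₁ - lam o₂ := by
    omega
  have key : (∑ i, (Uo (θ i) o₂ : ℝ)) - (∑ i, (Uo (θ i) o₁ : ℝ))
      ≤ ((lam o₁ - lam o₂ : ℤ) : ℝ) := by
    have : (((∑ i, (Uo (θ i) o₂ : ℤ)) - ∑ i, (Uo (θ i) o₁ : ℤ) : ℤ) : ℝ)
        ≤ ((lam o₁ - lam o₂ : ℤ) : ℝ) := by exact_mod_cast hint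
    push_cast at this ⊢
    linarith
  by_contra hcon
  push_neg at hcon
  have h1 := abs_le.mp (hcon o₁)
  have h2' := abs_le.mp (hcon o₂)
  have : ((lam o₁ - lam o₂ : ℤ) : ℝ) ≤ Δ := by push_cast; linarith
  linarith

private lemma tailNat {r t : ℝ} (hr0 : 0 < r) (hr1 : r < 1) (ht0 : 0 < t) :
    Summable (fun n : ℕ => if t < (n:ℝ) then r ^ n else 0) ∧
      (∑' n : ℕ, if t < (n:ℝ) then r ^ n else 0) ≤ r ^ (Nat.floor t + 1) * (1 - r)⁻¹ := by
  have hgeo : Summable (fun n : ℕ => r ^ n) := summable_geometric_of_lt_one hr0.le hr1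
  have hfN : Summable (fun n : ℕ => if t < (n:ℝ) then r ^ n else 0) := by
    refine Summable.of_nonneg_of_le (fun n => ?_) (fun n => ?_) hgeo
    · split <;> positivity
    · split
      · exact le_rfl
      · positivity
  refine ⟨hfN, ?_⟩
  set n₀ := Nat.floor t + 1 with hn₀
  have hsplit := hfN.sum_add_tsum_nat_add n₀
  have hzero : (∑ i ∈ Finset.range n₀, if t < (i:ℝ) then r ^ i else 0) = 0 := by
    refine Finset.sum_eq_zero fun i hi => ?_
    rw [Finset.mem_range, hn₀, Nat.lt_succ_iff] at hi
    rw [if_neg (not_lt.mpr ?_)]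
    exact le_trans (Nat.cast_le.mpr hi) (Nat.floor_le ht0.le)
  have hshift : (∑' i : ℕ, if t < ((i + n₀ : ℕ):ℝ) then r ^ (i + n₀) else 0)
      = r ^ n₀ * (1 - r)⁻¹ := by
    have hcond : ∀ i : ℕ, (if t < ((i + n₀ : ℕ):ℝ) then r ^ (i + n₀) else 0)
        = r ^ i * r ^ n₀ := by
      intro i
      rw [if_pos, pow_add]
      have h1 : t < (n₀ : ℝ) := by
        rw [hn₀]; push_cast; exact Nat.lt_floor_add_one t
      refine h1.trans_le ?_
      push_cast
      linarith [Nat.cast_nonneg (α := ℝ) i]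
    rw [tsum_congr hcond, tsum_mul_right, tsum_geometric_of_lt_one hr0.le hr1]
    ring
  calc (∑' n : ℕ, if t < (n:ℝ) then r ^ n else 0)
      = (∑ i ∈ Finset.range n₀, if t < (i:ℝ) then r ^ i else 0)
          + ∑' i : ℕ, if t < ((i + n₀ : ℕ):ℝ) then r ^ (i + n₀) else 0 := by
        rw [hsplit]
    _ = r ^ n₀ * (1 - r)⁻¹ := by rw [hzero, hshift, zero_add]
    _ ≤ _ := le_rfl

private lemma tailInt {r t : ℝ} (hr0 : 0 < r) (hr1 : r < 1) (ht0 : 0 < t) :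
    Summable (fun k : ℤ => if t < |(k:ℝ)| then r ^ k.natAbs else 0) ∧
      (∑' k : ℤ, if t < |(k:ℝ)| then r ^ k.natAbs else 0)
        ≤ 2 * (r ^ (Nat.floor t + 1) * (1 - r)⁻¹) := by
  obtain ⟨hfN, htN⟩ := tailNat hr0 hr1 ht0
  have efA : ∀ nn : ℕ, (if t < |((nn:ℤ):ℝ)| then r ^ ((nn:ℤ)).natAbs else 0)
      = (if t < (nn:ℝ) then r ^ nn else 0) := by
    intro nn
    rw [Int.natAbs_natCast]
    norm_num [abs_of_nonneg (Nat.cast_nonneg (α := ℝ) nn)]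
  have efB : ∀ nn : ℕ, (if t < |((-((nn:ℤ)+1) : ℤ):ℝ)| then r ^ ((-((nn:ℤ)+1) : ℤ)).natAbs else 0)
      = (if t < ((nn+1 : ℕ):ℝ) then r ^ (nn+1) else 0) := by
    intro nn
    have h1 : ((-((nn:ℤ)+1) : ℤ)).natAbs = nn + 1 := by omega
    have h2 : |((-((nn:ℤ)+1) : ℤ):ℝ)| = ((nn+1 : ℕ):ℝ) := by
      push_cast
      rw [abs_neg, abs_of_nonneg (by positivity)]
    rw [h1, h2]
  have hshift : Summable (fun nn : ℕ => if t < ((nn+1 : ℕ):ℝ) then r ^ (nn+1) else 0) :=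
    (summable_nat_add_iff 1).mpr hfN
  have hA : Summable (fun nn : ℕ => if t < |((nn:ℤ):ℝ)| then r ^ ((nn:ℤ)).natAbs else 0) :=
    hfN.congr fun nn => (efA nn).symm
  have hB : Summable (fun nn : ℕ =>
      if t < |((-((nn:ℤ)+1) : ℤ):ℝ)| then r ^ ((-((nn:ℤ)+1) : ℤ)).natAbs else 0) :=
    hshift.congr fun nn => (efB nn).symm
  constructor
  · exact Summable.of_nat_of_neg_add_one
      (f := fun k : ℤ => if t < |(k:ℝ)| then r ^ k.natAbs else 0) hA hB
  · rw [tsum_of_nat_of_neg_add_one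
      (f := fun k : ℤ => if t < |(k:ℝ)| then r ^ k.natAbs else 0) hA hB]
    have e1 : (∑' nn : ℕ, if t < |((nn:ℤ):ℝ)| then r ^ ((nn:ℤ)).natAbs else 0)
        ≤ r ^ (Nat.floor t + 1) * (1 - r)⁻¹ := by
      rw [tsum_congr efA]; exact htN
    have e2 : (∑' nn : ℕ,
        if t < |((-((nn:ℤ)+1) : ℤ):ℝ)| then r ^ ((-((nn:ℤ)+1) : ℤ)).natAbs else 0)
        ≤ r ^ (Nat.floor t + 1) * (1 - r)⁻¹ := by
      rw [tsum_congr efB]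
      have hz := hfN.tsum_eq_zero_add
      have h0 : (0:ℝ) ≤ if t < ((0:ℕ):ℝ) then r ^ 0 else 0 := by split <;> positivity
      have : (∑' nn : ℕ, if t < ((nn+1 : ℕ):ℝ) then r ^ (nn+1) else 0)
          ≤ ∑' n : ℕ, if t < (n:ℝ) then r ^ n else 0 := by
        rw [hz]
        linarith
      exact this.trans htN
    linarith

/-- for the noisy VCG mechanism (outcome set of size `m+1`, utilities
in `{0,…,M}`), for every profile `θ` and `Δ > 0`, the probability that the selected
outcome's welfare falls short of optimal by more than `Δ` is at most
`2·|O|·exp(−εΔ/(2M·|O|))`. -/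
theorem stmt19 {Θ : Type*} {n m Mb : ℕ} (hMb : 0 < Mb)
    (Uo : Θ → Fin (m + 1) → ℕ) (hUo : ∀ t o, Uo t o ≤ Mb)
    (ε : ℝ) (hε : 0 < ε) (θ : Fin n → Θ) (Δ : ℝ) (hΔ : 0 < Δ) :
    (∑' lam : Fin (m + 1) → ℤ,
        if (∑ i, (Uo (θ i) (argmaxV (Vscore Uo lam θ)) : ℝ))
            < (⨆ o' : Fin (m + 1), ∑ i, (Uo (θ i) o' : ℝ)) - Δ
        then ∏ o, lapVCG ε Mb m (lam o) else 0)
      ≤ 2 * (m + 1 : ℝ) * Real.exp (-(ε * Δ) / (2 * (Mb : ℝ) * (m + 1 : ℝ))) := by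
  classical
  have hD0 : (0:ℝ) < (Mb : ℝ) * ((m:ℝ) + 1) := by positivity
  set c : ℝ := ε / ((Mb : ℝ) * ((m:ℝ) + 1)) with hc
  have hc0 : 0 < c := div_pos hε hD0
  set r : ℝ := Real.exp (-c) with hr
  have hr0 : 0 < r := Real.exp_pos _
  have hr1 : r < 1 := by rw [hr]; exact Real.exp_lt_one_iff.mpr (by linarith)
  have hq : ∀ k : ℤ, Real.exp (-(ε * |(k : ℝ)|) / ((Mb : ℝ) * ((m:ℝ) + 1))) = r ^ k.natAbs := by
    intro k
    rw [hr, ← Real.exp_nat_mul]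
    congr 1
    rw [← Int.cast_abs, Int.abs_eq_natAbs, Int.cast_natCast, hc]
    field_simp
  have hgeo : Summable (fun nn : ℕ => r ^ nn) := summable_geometric_of_lt_one hr0.le hr1
  have hqsum : Summable (fun k : ℤ => r ^ k.natAbs) := by
    refine Summable.of_nat_of_neg_add_one (f := fun k : ℤ => r ^ k.natAbs) ?_ ?_
    · exact hgeo.congr fun nn => by simp
    · refine ((summable_nat_add_iff 1).mpr hgeo).congr fun nn => ?_
      congr 1
  have hZdef : lapZ ε Mb m = ∑' k : ℤ, r ^ k.natAbs := tsum_congr hq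
  have hZge : (1 - r)⁻¹ ≤ lapZ ε Mb m := by
    rw [hZdef, tsum_of_nat_of_neg_add_one (f := fun k : ℤ => r ^ k.natAbs)
      (hgeo.congr fun nn => by simp)
      (((summable_nat_add_iff 1).mpr hgeo).congr fun nn => by congr 1)]
    have h1 : (∑' nn : ℕ, r ^ ((nn:ℤ)).natAbs) = (1 - r)⁻¹ := by
      rw [tsum_congr fun nn => by rw [Int.natAbs_natCast]]
      exact tsum_geometric_of_lt_one hr0.le hr1
    have h2 : (0:ℝ) ≤ ∑' nn : ℕ, r ^ ((-((nn:ℤ)+1) : ℤ)).natAbs :=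
      tsum_nonneg fun _ => pow_nonneg hr0.le _
    linarith
  have hZ0 : 0 < lapZ ε Mb m := lt_of_lt_of_le (inv_pos.mpr (by linarith)) hZge
  have hp0 : ∀ k, 0 ≤ lapVCG ε Mb m k := fun k => div_nonneg (Real.exp_nonneg _) hZ0.le
  have hpsum : Summable (fun k : ℤ => lapVCG ε Mb m k) :=
    (hqsum.congr fun k => (hq k).symm).div_const _
  have hp1 : (∑' k : ℤ, lapVCG ε Mb m k) = 1 := by
    unfold lapVCG
    rw [tsum_div_const]
    have he : (∑' k : ℤ, Real.exp (-(ε * |(k:ℝ)|) / ((Mb : ℝ) * (m + 1 : ℝ)))) = lapZ ε Mb m :=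
      rfl
    rw [he]
    exact div_self hZ0.ne'
  set t : ℝ := Δ / 2 with ht
  have ht0 : 0 < t := by positivity
  obtain ⟨hfInt, htInt⟩ := tailInt hr0 hr1 ht0
  -- tail bound for the pmf
  have htailP : (∑' k : ℤ, if t < |(k:ℝ)| then lapVCG ε Mb m k else 0)
      ≤ 2 * Real.exp (-(ε * Δ) / (2 * (Mb : ℝ) * (m + 1 : ℝ))) := by
    have he : ∀ k : ℤ, (if t < |(k:ℝ)| then lapVCG ε Mb m k else 0)
        = (if t < |(k:ℝ)| then r ^ k.natAbs else 0) / lapZ ε Mb m := by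
      intro k
      unfold lapVCG
      rw [hq]
      split <;> simp
    rw [tsum_congr he, tsum_div_const, div_le_iff₀ hZ0]
    have hrE : r ^ (Nat.floor t + 1) ≤ Real.exp (-(ε * Δ) / (2 * (Mb : ℝ) * (m + 1 : ℝ))) := by
      rw [hr, ← Real.exp_nat_mul]
      apply Real.exp_le_exp.mpr
      have h1 : t ≤ ((Nat.floor t + 1 : ℕ) : ℝ) := by
        push_cast
        exact (Nat.lt_floor_add_one t).le
      have h2 : ((Nat.floor t + 1 : ℕ) : ℝ) * (-c) ≤ t * (-c) :=
        mul_le_mul_of_nonpos_right h1 (by linarith)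
      refine h2.trans_eq ?_
      rw [hc, ht]
      field_simp
    have hE0 : (0:ℝ) ≤ Real.exp (-(ε * Δ) / (2 * (Mb : ℝ) * (m + 1 : ℝ))) := Real.exp_nonneg _
    calc (∑' k : ℤ, if t < |(k:ℝ)| then r ^ k.natAbs else 0)
        ≤ 2 * (r ^ (Nat.floor t + 1) * (1 - r)⁻¹) := htInt
      _ ≤ 2 * (Real.exp (-(ε * Δ) / (2 * (Mb : ℝ) * (m + 1 : ℝ))) * lapZ ε Mb m) := by
          have h3 : (0:ℝ) ≤ (1 - r)⁻¹ := inv_nonneg.mpr (by linarith)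
          have := mul_le_mul hrE hZge h3 hE0
          nlinarith [pow_nonneg hr0.le (Nat.floor t + 1)]
      _ = 2 * Real.exp (-(ε * Δ) / (2 * (Mb : ℝ) * (m + 1 : ℝ))) * lapZ ε Mb m := by ring
  -- the per-coordinate "bad noise" weighted products
  set G : Fin (m + 1) → Fin (m + 1) → ℤ → ℝ := fun o o' k =>
    if o' = o then (if t < |(k:ℝ)| then lapVCG ε Mb m k else 0) else lapVCG ε Mb m k with hG
  have hG0 : ∀ o o' k, 0 ≤ G o o' k := by
    intro o o' k
    rw [hG]
    dsimp only
    split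
    · split
      · exact hp0 k
      · exact le_rfl
    · exact hp0 k
  have hGsum : ∀ o o', Summable (G o o') := by
    intro o o'
    rw [hG]
    dsimp only
    split
    · refine Summable.of_nonneg_of_le (fun k => ?_) (fun k => ?_) hpsum
      · split
        · exact hp0 k
        · exact le_rfl
      · split
        · exact le_rfl
        · exact hp0 k
    · exact hpsum
  have hFo := fun o => pi_tsum_prod (m + 1) (G o) (hG0 o) (hGsum o)
  have hPall := pi_tsum_prod (m + 1) (fun _ => lapVCG ε Mb m)
    (fun _ k => hp0 k) (fun _ => hpsum)
  -- pointwise bound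
  have key : ∀ lam : Fin (m + 1) → ℤ,
      (if (∑ i, (Uo (θ i) (argmaxV (Vscore Uo lam θ)) : ℝ))
          < (⨆ o' : Fin (m + 1), ∑ i, (Uo (θ i) o' : ℝ)) - Δ
       then ∏ o, lapVCG ε Mb m (lam o) else 0)
      ≤ ∑ o : Fin (m + 1), ∏ o', G o o' (lam o') := by
    intro lam
    split
    · rename_i hE
      obtain ⟨o₀, ho₀⟩ := exists_large_noise Uo θ lam hE
      have heq : (∏ o', G o₀ o' (lam o')) = ∏ o, lapVCG ε Mb m (lam o) := by
        refine Finset.prod_congr rfl fun o' _ => ?_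
        rw [hG]
        dsimp only
        by_cases h : o' = o₀
        · rw [if_pos h, if_pos (by rw [h]; exact ho₀)]
        · rw [if_neg h]
      calc (∏ o, lapVCG ε Mb m (lam o)) = ∏ o', G o₀ o' (lam o') := heq.symm
        _ ≤ ∑ o : Fin (m + 1), ∏ o', G o o' (lam o') :=
            Finset.single_le_sum (f := fun o => ∏ o', G o o' (lam o'))
              (fun o _ => Finset.prod_nonneg fun o' _ => hG0 o o' (lam o'))
              (Finset.mem_univ o₀)
    · exact Finset.sum_nonneg fun o _ =>
        Finset.prod_nonneg fun o' _ => hG0 o o' (lam o')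
  have hLHSsum : Summable (fun lam : Fin (m + 1) → ℤ =>
      if (∑ i, (Uo (θ i) (argmaxV (Vscore Uo lam θ)) : ℝ))
          < (⨆ o' : Fin (m + 1), ∑ i, (Uo (θ i) o' : ℝ)) - Δ
      then ∏ o, lapVCG ε Mb m (lam o) else 0) := by
    refine Summable.of_nonneg_of_le (fun lam => ?_) (fun lam => ?_) hPall.1
    · split
      · exact Finset.prod_nonneg fun o _ => hp0 (lam o)
      · exact le_rfl
    · split
      · exact le_rfl
      · exact Finset.prod_nonneg fun o _ => hp0 (lam o)
  have hRHSsum : Summable (fun lam : Fin (m + 1) → ℤ =>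
      ∑ o : Fin (m + 1), ∏ o', G o o' (lam o')) :=
    summable_sum fun o _ => (hFo o).1
  have step1 := Summable.tsum_le_tsum key hLHSsum hRHSsum
  have step2 : (∑' lam : Fin (m + 1) → ℤ, ∑ o : Fin (m + 1), ∏ o', G o o' (lam o'))
      = ∑ o : Fin (m + 1), ∑' lam : Fin (m + 1) → ℤ, ∏ o', G o o' (lam o') :=
    Summable.tsum_finsetSum fun o _ => (hFo o).1
  have hterm : ∀ o : Fin (m + 1),
      (∑' lam : Fin (m + 1) → ℤ, ∏ o', G o o' (lam o'))
        ≤ 2 * Real.exp (-(ε * Δ) / (2 * (Mb : ℝ) * (m + 1 : ℝ))) := by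
    intro o
    rw [(hFo o).2]
    rw [Finset.prod_eq_single o
      (fun b _ hb => by
        have : (∑' k : ℤ, G o b k) = ∑' k : ℤ, lapVCG ε Mb m k := by
          refine tsum_congr fun k => ?_
          rw [hG]
          dsimp only
          rw [if_neg hb]
        rw [this, hp1])
      (fun h => absurd (Finset.mem_univ o) h)]
    have : (∑' k : ℤ, G o o k) = ∑' k : ℤ, if t < |(k:ℝ)| then lapVCG ε Mb m k else 0 := by
      refine tsum_congr fun k => ?_
      rw [hG]
      dsimp only
      rw [if_pos rfl]
    rw [this]
    exact htailP
  calc (∑' lam : Fin (m + 1) → ℤ,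
        if (∑ i, (Uo (θ i) (argmaxV (Vscore Uo lam θ)) : ℝ))
            < (⨆ o' : Fin (m + 1), ∑ i, (Uo (θ i) o' : ℝ)) - Δ
        then ∏ o, lapVCG ε Mb m (lam o) else 0)
      ≤ ∑' lam : Fin (m + 1) → ℤ, ∑ o : Fin (m + 1), ∏ o', G o o' (lam o') := step1
    _ = ∑ o : Fin (m + 1), ∑' lam : Fin (m + 1) → ℤ, ∏ o', G o o' (lam o') := step2
    _ ≤ ∑ _o : Fin (m + 1), 2 * Real.exp (-(ε * Δ) / (2 * (Mb : ℝ) * (m + 1 : ℝ))) :=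
        Finset.sum_le_sum fun o _ => hterm o
    _ = 2 * (m + 1 : ℝ) * Real.exp (-(ε * Δ) / (2 * (Mb : ℝ) * (m + 1 : ℝ))) := by
        rw [Finset.sum_const, Finset.card_univ, Fintype.card_fin, nsmul_eq_mul]
        push_cast
        ring
end
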